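/- If (H, ≼) is a locally artinian premon, then every ≼-non-unit of H factors as a finite product of ≼-irreducibles; that is, H is ≼-factorable. -/

import Mathlib

variable {H : Type*} [Monoid H]

/-- `u` is a `≼`-unit. -/
def PreUnit (r : H → H → Prop) (u : H) : Prop := r u 1 ∧ r 1 u

/-- strict form of the preorder: `a ≺ b`. -/
def PreLt (r : H → H → Prop) (a b : H) : Prop := r a b ∧ ¬ r b a

/-- the `≼`-height of `x`: the sup in `ℕ∞` of the lengths `n ≥ 1` of chains of
`≼`-non-units `x = x₁ ≻ x₂ ≻ ⋯ ≻ xₙ`, with `sSup ∅ = 0`. -/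
noncomputable def PreHeight (r : H → H → Prop) (x : H) : ℕ∞ :=
  sSup {e : ℕ∞ | ∃ n : ℕ, e = n ∧ 1 ≤ n ∧ ∃ f : ℕ → H, f 0 = x ∧
    (∀ i < n, ¬ PreUnit r (f i)) ∧ ∀ i, i + 1 < n → PreLt r (f (i + 1)) (f i)}

/-- `x` is `≼`-artinian. -/
def PreArtinian (r : H → H → Prop) (x : H) : Prop :=
  ¬ ∃ f : ℕ → H, f 0 = x ∧ ∀ i, PreLt r (f (i + 1)) (f i)

/-- `a` is a `≼`-quark. -/
def PreQuark (r : H → H → Prop) (a : H) : Prop :=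
  ¬ PreUnit r a ∧ ¬ ∃ b, ¬ PreUnit r b ∧ PreLt r b a

/-- `a` is a `≼`-irreducible (of degree 2). -/
def PreIrred (r : H → H → Prop) (a : H) : Prop :=
  ¬ PreUnit r a ∧ ∀ y z : H, ¬ PreUnit r y → ¬ PreUnit r z →
    PreLt r y a → PreLt r z a → a ≠ y * z

/-- `a` is a `≼`-irreducible of degree `s`. -/
def PreIrredDeg (r : H → H → Prop) (s : ℕ) (a : H) : Prop :=
  ¬ PreUnit r a ∧ ∀ l : List H, 2 ≤ l.length → l.length ≤ s →
    (∀ x ∈ l, ¬ PreUnit r x ∧ PreLt r x a) → a ≠ l.prod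

/-- `(H, ≼)` is locally artinian. -/
def LocallyArtinian (r : H → H → Prop) : Prop :=
  ∀ x : H, ¬ PreUnit r x → ∃ l : List H,
    (∀ a ∈ l, ¬ PreUnit r a ∧ PreArtinian r a) ∧ x = l.prod

/-- `H` is `≼`-factorable. -/
def PreFactorable (r : H → H → Prop) : Prop :=
  ∀ x : H, ¬ PreUnit r x → ∃ l : List H, (∀ a ∈ l, PreIrred r a) ∧ x = l.prod

lemma acc_of_artinian {r : H → H → Prop} {x : H} (hx : PreArtinian r x) :
    Acc (PreLt r) x := by
  by_contra h
  apply hx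
  have key : ∀ a : H, ¬ Acc (PreLt r) a → ∃ b, PreLt r b a ∧ ¬ Acc (PreLt r) b := by
    intro a ha
    by_contra hc
    push_neg at hc
    exact ha (Acc.intro a fun y hy => hc y hy)
  choose g hg1 hg2 using key
  let F : ℕ → {a : H // ¬ Acc (PreLt r) a} := fun n =>
    Nat.rec ⟨x, h⟩ (fun _ p => ⟨g p.1 p.2, hg2 p.1 p.2⟩) n
  exact ⟨fun n => (F n).1, rfl, fun i => hg1 (F i).1 (F i).2⟩

lemma factor_acc {r : H → H → Prop} : ∀ x : H, Acc (PreLt r) x → ¬ PreUnit r x →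
    ∃ l : List H, (∀ a ∈ l, PreIrred r a) ∧ x = l.prod := by
  intro x hacc
  induction hacc with
  | intro x h ih =>
    intro hx
    by_cases hirr : PreIrred r x
    · exact ⟨[x], by simp [hirr], by simp⟩
    · simp only [PreIrred, not_and, not_forall] at hirr
      obtain ⟨y, z, hy, hz, hya, hza, heq⟩ := hirr hx
      obtain ⟨l1, hl1, h1⟩ := ih y hya hy
      obtain ⟨l2, hl2, h2⟩ := ih z hza hz
      refine ⟨l1 ++ l2, ?_, ?_⟩
      · intro a ha
        rcases List.mem_append.mp ha with h' | h'
        · exact hl1 a h'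
        · exact hl2 a h'
      · rw [List.prod_append, ← h1, ← h2, not_not.mp heq]

theorem stmt5 (r : H → H → Prop) (hrefl : Reflexive r) (htrans : Transitive r)
    (hla : LocallyArtinian r) : PreFactorable r := by
  intro x hx
  obtain ⟨l, hl, hxl⟩ := hla x hx
  subst hxl
  clear hx
  induction l with
  | nil => exact ⟨[], by simp, by simp⟩
  | cons a t ih =>
    obtain ⟨ha, hart⟩ := hl a List.mem_cons_self
    obtain ⟨m1, hm1, h1⟩ := factor_acc a (acc_of_artinian hart) ha
    obtain ⟨m2, hm2, h2⟩ := ih fun b hb => hl b (List.mem_cons_of_mem a hb)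
    refine ⟨m1 ++ m2, ?_, ?_⟩
    · intro b hb
      rcases List.mem_append.mp hb with h' | h'
      · exact hm1 b h'
      · exact hm2 b h'
    · rw [List.prod_append, List.prod_cons, ← h1, ← h2]
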